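/- Let m ≥ n, let A ∈ ℝ^{m×n} have full rank n with columns a_j, and let u > 0. Suppose ΔA ∈ ℝ^{m×n} satisfies |ΔA_{ij}| ≤ 2u‖a_j‖₂ for all i, j, and that 4√m·u < 1 and 16m√n·u·κ₂ᴰ(A) < 1. Then A + ΔA has nonzero columns and κ₂ᴰ(A + ΔA) ≤ 3κ₂ᴰ(A). -/

import Mathlib

open scoped BigOperators
open Matrix

/-- Euclidean norm of a vector in `ℝ^m`. -/
noncomputable def vecNorm {m : ℕ} (v : Fin m → ℝ) : ℝ :=
  Real.sqrt (∑ i, v i ^ 2)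

/-- The `k`-th largest singular value of a real `m × n` matrix
(`k = 0` gives the largest). -/
noncomputable def sval {m n : ℕ} (A : Matrix (Fin m) (Fin n) ℝ) (k : Fin n) : ℝ :=
  Real.sqrt
    (((show (Aᵀ * A).IsHermitian by simpa using Matrix.isHermitian_conjTranspose_mul_self A).eigenvalues ∘
      Tuple.sort (show (Aᵀ * A).IsHermitian by simpa using Matrix.isHermitian_conjTranspose_mul_self A).eigenvalues) k.rev)

/-- Spectral norm: the largest singular value. -/
noncomputable def specNorm {m n : ℕ} (A : Matrix (Fin m) (Fin n) ℝ) : ℝ :=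
  ⨆ k, sval A k

/-- Smallest singular value. -/
noncomputable def sMin {m n : ℕ} (A : Matrix (Fin m) (Fin n) ℝ) : ℝ :=
  ⨅ k, sval A k

/-- Frobenius norm. -/
noncomputable def frobNorm {m n : ℕ} (A : Matrix (Fin m) (Fin n) ℝ) : ℝ :=
  Real.sqrt (∑ i, ∑ j, (A i j) ^ 2)

/-- Frobenius norm of the off-diagonal part of a square matrix. -/
noncomputable def offF {n : ℕ} (M : Matrix (Fin n) (Fin n) ℝ) : ℝ :=
  frobNorm (M - Matrix.diagonal (fun i => M i i))

/-- Diagonal matrix of inverse column norms `D(A)`. -/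
noncomputable def colScale {m n : ℕ} (A : Matrix (Fin m) (Fin n) ℝ) :
    Matrix (Fin n) (Fin n) ℝ :=
  Matrix.diagonal (fun j => (vecNorm (fun i => A i j))⁻¹)

/-- Condition number `κ₂(A) = σ_max(A) / σ_min(A)`. -/
noncomputable def kappa2 {m n : ℕ} (A : Matrix (Fin m) (Fin n) ℝ) : ℝ :=
  specNorm A / sMin A

/-- One-sided scaled condition number `κ₂ᴰ(A) = κ₂(A · D(A))`. -/
noncomputable def scaledCond {m n : ℕ} (A : Matrix (Fin m) (Fin n) ℝ) : ℝ :=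
  kappa2 (A * colScale A)

/-- Entrywise absolute value of a matrix. -/
def matAbs {m n : ℕ} (A : Matrix (Fin m) (Fin n) ℝ) : Matrix (Fin m) (Fin n) ℝ :=
  fun i j => |A i j|

section Helpers

variable {m n : ℕ}

lemma vecNorm_nonneg (v : Fin m → ℝ) : 0 ≤ vecNorm v := Real.sqrt_nonneg _

lemma vecNorm_sq (v : Fin m → ℝ) : vecNorm v ^ 2 = ∑ i, v i ^ 2 :=
  Real.sq_sqrt (Finset.sum_nonneg fun _ _ => sq_nonneg _)

lemma vecNorm_eq_norm (v : Fin m → ℝ) :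
    vecNorm v = ‖(WithLp.equiv 2 (Fin m → ℝ)).symm v‖ := by
  rw [EuclideanSpace.norm_eq]
  simp [vecNorm, sq_abs]

lemma vecNorm_eq_zero {v : Fin m → ℝ} (h : vecNorm v = 0) : v = 0 := by
  have h1 := vecNorm_eq_norm v
  rw [h] at h1
  have h2 := (norm_eq_zero.mp h1.symm)
  funext i
  exact congrFun (congrArg (WithLp.equiv 2 (Fin m → ℝ)) h2) i

lemma vecNorm_add_le (v w : Fin m → ℝ) :
    vecNorm (v + w) ≤ vecNorm v + vecNorm w := by
  rw [vecNorm_eq_norm, vecNorm_eq_norm, vecNorm_eq_norm]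
  exact norm_add_le _ _

lemma vecNorm_sub_le (v w : Fin m → ℝ) :
    vecNorm (v - w) ≤ vecNorm v + vecNorm w := by
  rw [vecNorm_eq_norm, vecNorm_eq_norm, vecNorm_eq_norm]
  exact norm_sub_le _ _

lemma vecNorm_smul (c : ℝ) (v : Fin m → ℝ) :
    vecNorm (c • v) = |c| * vecNorm v := by
  rw [vecNorm_eq_norm, vecNorm_eq_norm]
  have h : (WithLp.equiv 2 (Fin m → ℝ)).symm (c • v)
      = c • (WithLp.equiv 2 (Fin m → ℝ)).symm v := rfl
  rw [h, norm_smul]; simp [Real.norm_eq_abs]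

lemma euclid_inner_eq (x y : EuclideanSpace ℝ (Fin n)) :
    (inner ℝ x y : ℝ) = ∑ i, x i * y i := by
  simp [PiLp.inner_apply, RCLike.inner_apply, mul_comm]

lemma pilp_sum_apply (f : Fin n → EuclideanSpace ℝ (Fin n)) (j : Fin n) :
    (∑ i, f i) j = ∑ i, f i j := by
  induction (Finset.univ : Finset (Fin n)) using Finset.induction with
  | empty => rfl
  | insert _ _ h ih => rw [Finset.sum_insert h, Finset.sum_insert h, PiLp.add_apply, ih]

lemma sum_mul_sum_ortho (c d : Fin n → ℝ) (w : Fin n → Fin n → ℝ)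
    (horth : ∀ i j, (∑ k, w i k * w j k) = if i = j then 1 else 0) :
    ∑ k, (∑ i, c i * w i k) * (∑ j, d j * w j k) = ∑ i, c i * d i := by
  simp_rw [Finset.sum_mul, Finset.mul_sum]
  rw [Finset.sum_comm]
  refine Finset.sum_congr rfl fun i _ => ?_
  rw [Finset.sum_comm]
  have h : ∀ j, ∑ k, c i * w i k * (d j * w j k) = (c i * d j) * ∑ k, w i k * w j k := by
    intro j; rw [Finset.mul_sum]; exact Finset.sum_congr rfl fun k _ => by ring
  simp_rw [h, horth, mul_ite, mul_one, mul_zero]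
  simp

lemma rayleigh_decomp (H : Matrix (Fin n) (Fin n) ℝ) (hH : H.IsHermitian) (v : Fin n → ℝ) :
    v ⬝ᵥ (H *ᵥ v) = ∑ i, hH.eigenvalues i *
      (∑ j, hH.eigenvectorBasis i j * v j) ^ 2 ∧
    ∑ j, v j ^ 2 = ∑ i, (∑ j, hH.eigenvectorBasis i j * v j) ^ 2 := by
  classical
  set b := hH.eigenvectorBasis with hb
  set μ := hH.eigenvalues with hμ
  set c : Fin n → ℝ := fun i => ∑ j, b i j * v j with hc
  have horth : ∀ i j, (∑ k, b i k * b j k) = if i = j then 1 else 0 := by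
    intro i j
    have h := b.orthonormal
    rw [orthonormal_iff_ite] at h
    have h2 := h i j
    rw [euclid_inner_eq] at h2
    simpa using h2
  have hv : ∀ j, v j = ∑ i, c i * b i j := by
    intro j
    have hsum := b.sum_repr' (WithLp.toLp 2 v)
    have h3 := congrArg (fun w : EuclideanSpace ℝ (Fin n) => w j) hsum
    simp only [PiLp.toLp_apply] at h3
    rw [← h3, pilp_sum_apply]
    refine Finset.sum_congr rfl fun i _ => ?_
    rw [PiLp.smul_apply, euclid_inner_eq]
    simp [hc, smul_eq_mul]
  have hHv : ∀ k, (H *ᵥ v) k = ∑ i, (c i * μ i) * b i k := by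
    intro k
    have hmv : ∀ i, (H *ᵥ ⇑(b i)) k = μ i * b i k := by
      intro i
      have h4 := congrFun (hH.mulVec_eigenvectorBasis i) k
      simpa using h4
    calc (H *ᵥ v) k = ∑ l, H k l * v l := rfl
      _ = ∑ l, H k l * ∑ i, c i * b i l := by simp_rw [← hv]
      _ = ∑ l, ∑ i, c i * (H k l * b i l) := by
          refine Finset.sum_congr rfl fun l _ => ?_
          rw [Finset.mul_sum]; exact Finset.sum_congr rfl fun i _ => by ring
      _ = ∑ i, ∑ l, c i * (H k l * b i l) := Finset.sum_comm
      _ = ∑ i, (c i * μ i) * b i k := by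
          refine Finset.sum_congr rfl fun i _ => ?_
          rw [← Finset.mul_sum]
          rw [show (∑ l, H k l * b i l) = (H *ᵥ ⇑(b i)) k from rfl, hmv i]
          ring
  constructor
  · calc v ⬝ᵥ (H *ᵥ v) = ∑ k, (∑ i, c i * b i k) * (∑ i, (c i * μ i) * b i k) := by
          simp only [dotProduct]
          exact Finset.sum_congr rfl fun k _ => by rw [← hv, ← hHv]
      _ = ∑ i, c i * (c i * μ i) := sum_mul_sum_ortho c (fun i => c i * μ i) (fun i k => b i k) horth
      _ = ∑ i, μ i * c i ^ 2 := Finset.sum_congr rfl fun i _ => by ring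
  · calc ∑ j, v j ^ 2 = ∑ k, (∑ i, c i * b i k) * (∑ i, c i * b i k) := by
          refine Finset.sum_congr rfl fun k _ => ?_
          rw [← hv]; ring
      _ = ∑ i, c i * c i := sum_mul_sum_ortho c c (fun i k => b i k) horth
      _ = ∑ i, c i ^ 2 := Finset.sum_congr rfl fun i _ => by ring

lemma dot_transpose (X : Matrix (Fin m) (Fin n) ℝ) (v : Fin n → ℝ) :
    v ⬝ᵥ ((Xᴴ * X) *ᵥ v) = (X *ᵥ v) ⬝ᵥ (X *ᵥ v) := by
  rw [← Matrix.mulVec_mulVec, Matrix.dotProduct_mulVec,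
    Matrix.conjTranspose_eq_transpose_of_trivial, Matrix.vecMul_transpose]

lemma vecNorm_mulVec_eq (X : Matrix (Fin m) (Fin n) ℝ) (v : Fin n → ℝ) :
    vecNorm (X *ᵥ v) = Real.sqrt (v ⬝ᵥ ((Xᴴ * X) *ᵥ v)) := by
  rw [dot_transpose, vecNorm]
  congr 1
  simp [dotProduct, pow_two]

lemma specNorm_spec (X : Matrix (Fin m) (Fin n) ℝ) (hn : 0 < n) :
    ∃ i0, specNorm X = Real.sqrt (((show (Xᵀ * X).IsHermitian by simpa using Matrix.isHermitian_conjTranspose_mul_self X)).eigenvalues i0) ∧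
      ∀ i, ((show (Xᵀ * X).IsHermitian by simpa using Matrix.isHermitian_conjTranspose_mul_self X)).eigenvalues i ≤
        ((show (Xᵀ * X).IsHermitian by simpa using Matrix.isHermitian_conjTranspose_mul_self X)).eigenvalues i0 := by
  haveI : Nonempty (Fin n) := ⟨⟨0, hn⟩⟩
  set μ := ((show (Xᵀ * X).IsHermitian by simpa using Matrix.isHermitian_conjTranspose_mul_self X)).eigenvalues with hμ
  obtain ⟨i0, hi0⟩ := Finite.exists_max μ
  refine ⟨i0, ?_, hi0⟩
  have h1 : ∀ k, sval X k ≤ Real.sqrt (μ i0) := fun k =>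
    Real.sqrt_le_sqrt (hi0 _)
  have h2 : sval X ((Tuple.sort μ).symm i0).rev = Real.sqrt (μ i0) := by
    simp [sval, ← hμ]
  exact le_antisymm (ciSup_le h1) (h2 ▸ le_ciSup (Set.Finite.bddAbove (Set.finite_range _)) _)

lemma sMin_spec (X : Matrix (Fin m) (Fin n) ℝ) (hn : 0 < n) :
    ∃ i0, sMin X = Real.sqrt (((show (Xᵀ * X).IsHermitian by simpa using Matrix.isHermitian_conjTranspose_mul_self X)).eigenvalues i0) ∧
      ∀ i, ((show (Xᵀ * X).IsHermitian by simpa using Matrix.isHermitian_conjTranspose_mul_self X)).eigenvalues i0 ≤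
        ((show (Xᵀ * X).IsHermitian by simpa using Matrix.isHermitian_conjTranspose_mul_self X)).eigenvalues i := by
  haveI : Nonempty (Fin n) := ⟨⟨0, hn⟩⟩
  set μ := ((show (Xᵀ * X).IsHermitian by simpa using Matrix.isHermitian_conjTranspose_mul_self X)).eigenvalues with hμ
  obtain ⟨i0, hi0⟩ := Finite.exists_min μ
  refine ⟨i0, ?_, hi0⟩
  have h1 : ∀ k, Real.sqrt (μ i0) ≤ sval X k := fun k =>
    Real.sqrt_le_sqrt (hi0 _)
  have h2 : sval X ((Tuple.sort μ).symm i0).rev = Real.sqrt (μ i0) := by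
    simp [sval, ← hμ]
  exact le_antisymm (h2 ▸ ciInf_le (Set.Finite.bddBelow (Set.finite_range _)) _) (le_ciInf h1)

end Helpers
section Helpers2

variable {m n : ℕ}

lemma specNorm_nonneg (X : Matrix (Fin m) (Fin n) ℝ) : 0 ≤ specNorm X := by
  rcases Nat.eq_zero_or_pos n with h | h
  · subst h
    simp [specNorm, Real.iSup_of_isEmpty]
  · obtain ⟨i0, hs, _⟩ := specNorm_spec X h
    rw [hs]; exact Real.sqrt_nonneg _

lemma sMin_nonneg (X : Matrix (Fin m) (Fin n) ℝ) : 0 ≤ sMin X := by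
  rcases Nat.eq_zero_or_pos n with h | h
  · subst h
    simp [sMin, Real.iInf_of_isEmpty]
  · obtain ⟨i0, hs, _⟩ := sMin_spec X h
    rw [hs]; exact Real.sqrt_nonneg _

lemma mulVec_le_specNorm (hn : 0 < n) (X : Matrix (Fin m) (Fin n) ℝ) (v : Fin n → ℝ) :
    vecNorm (X *ᵥ v) ≤ specNorm X * vecNorm v := by
  obtain ⟨i0, hs, hmax⟩ := specNorm_spec X hn
  set hH := (show (Xᵀ * X).IsHermitian by simpa using Matrix.isHermitian_conjTranspose_mul_self X)
  obtain ⟨hq, hnrm⟩ := rayleigh_decomp (Xᴴ * X) hH v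
  have h0 : 0 ≤ hH.eigenvalues i0 := Matrix.eigenvalues_conjTranspose_mul_self_nonneg X i0
  rw [vecNorm_mulVec_eq, hs, vecNorm, ← Real.sqrt_mul h0]
  apply Real.sqrt_le_sqrt
  rw [hq, hnrm, Finset.mul_sum]
  exact Finset.sum_le_sum fun i _ => mul_le_mul_of_nonneg_right (hmax i) (sq_nonneg _)

lemma sMin_mulVec_le (hn : 0 < n) (X : Matrix (Fin m) (Fin n) ℝ) (v : Fin n → ℝ) :
    sMin X * vecNorm v ≤ vecNorm (X *ᵥ v) := by
  obtain ⟨i0, hs, hmin⟩ := sMin_spec X hn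
  set hH := (show (Xᵀ * X).IsHermitian by simpa using Matrix.isHermitian_conjTranspose_mul_self X)
  obtain ⟨hq, hnrm⟩ := rayleigh_decomp (Xᴴ * X) hH v
  have h0 : 0 ≤ hH.eigenvalues i0 := Matrix.eigenvalues_conjTranspose_mul_self_nonneg X i0
  rw [vecNorm_mulVec_eq, hs, vecNorm, ← Real.sqrt_mul h0]
  apply Real.sqrt_le_sqrt
  rw [hq, hnrm, Finset.mul_sum]
  exact Finset.sum_le_sum fun i _ => mul_le_mul_of_nonneg_right (hmin i) (sq_nonneg _)

lemma vecNorm_eigBasis (H : Matrix (Fin n) (Fin n) ℝ) (hH : H.IsHermitian) (i : Fin n) :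
    ∑ j, (hH.eigenvectorBasis i j) ^ 2 = 1 := by
  have h1 : ‖hH.eigenvectorBasis i‖ = 1 := hH.eigenvectorBasis.orthonormal.1 i
  rw [EuclideanSpace.norm_eq, Real.sqrt_eq_one] at h1
  simpa [sq_abs] using h1

lemma exists_unit_specNorm (hn : 0 < n) (X : Matrix (Fin m) (Fin n) ℝ) :
    ∃ v : Fin n → ℝ, vecNorm v = 1 ∧ vecNorm (X *ᵥ v) = specNorm X := by
  obtain ⟨i0, hs, _⟩ := specNorm_spec X hn
  set hH := (show (Xᵀ * X).IsHermitian by simpa using Matrix.isHermitian_conjTranspose_mul_self X)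
  refine ⟨⇑(hH.eigenvectorBasis i0), ?_, ?_⟩
  · rw [vecNorm]
    rw [vecNorm_eigBasis _ hH i0, Real.sqrt_one]
  · rw [vecNorm_mulVec_eq, hs]
    congr 1
    have h4 := hH.mulVec_eigenvectorBasis i0
    rw [Matrix.conjTranspose_eq_transpose_of_trivial, h4]
    rw [dotProduct_smul]
    have h5 : (⇑(hH.eigenvectorBasis i0) ⬝ᵥ ⇑(hH.eigenvectorBasis i0) : ℝ)
        = ∑ j, (hH.eigenvectorBasis i0 j) ^ 2 := by
      simp [dotProduct, pow_two]
    rw [smul_eq_mul, h5]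
    rw [vecNorm_eigBasis _ hH i0, mul_one]

lemma exists_unit_sMin (hn : 0 < n) (X : Matrix (Fin m) (Fin n) ℝ) :
    ∃ v : Fin n → ℝ, vecNorm v = 1 ∧ vecNorm (X *ᵥ v) = sMin X := by
  obtain ⟨i0, hs, _⟩ := sMin_spec X hn
  set hH := (show (Xᵀ * X).IsHermitian by simpa using Matrix.isHermitian_conjTranspose_mul_self X)
  refine ⟨⇑(hH.eigenvectorBasis i0), ?_, ?_⟩
  · rw [vecNorm]
    rw [vecNorm_eigBasis _ hH i0, Real.sqrt_one]
  · rw [vecNorm_mulVec_eq, hs]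
    congr 1
    have h4 := hH.mulVec_eigenvectorBasis i0
    rw [Matrix.conjTranspose_eq_transpose_of_trivial, h4]
    rw [dotProduct_smul]
    have h5 : (⇑(hH.eigenvectorBasis i0) ⬝ᵥ ⇑(hH.eigenvectorBasis i0) : ℝ)
        = ∑ j, (hH.eigenvectorBasis i0 j) ^ 2 := by
      simp [dotProduct, pow_two]
    rw [smul_eq_mul, h5]
    rw [vecNorm_eigBasis _ hH i0, mul_one]

lemma specNorm_le_frobNorm (hn : 0 < n) (X : Matrix (Fin m) (Fin n) ℝ) :
    specNorm X ≤ frobNorm X := by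
  obtain ⟨v, hv1, hvX⟩ := exists_unit_specNorm hn X
  rw [← hvX, vecNorm, frobNorm]
  apply Real.sqrt_le_sqrt
  have hv2 : ∑ j, v j ^ 2 = 1 := by
    rw [vecNorm, Real.sqrt_eq_one] at hv1
    exact hv1
  calc ∑ i, (X *ᵥ v) i ^ 2 = ∑ i, (∑ j, X i j * v j) ^ 2 := rfl
    _ ≤ ∑ i, (∑ j, X i j ^ 2) * (∑ j, v j ^ 2) :=
        Finset.sum_le_sum fun i _ =>
          Finset.sum_mul_sq_le_sq_mul_sq _ _ _
    _ = ∑ i, ∑ j, X i j ^ 2 := by simp [hv2]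

end Helpers2
section Helpers3

variable {m n : ℕ}

lemma sMin_pos_of_posDef (hn : 0 < n) (X : Matrix (Fin m) (Fin n) ℝ)
    (hPD : (Xᴴ * X).PosDef) : 0 < sMin X := by
  obtain ⟨i0, hs, _⟩ := sMin_spec X hn
  rw [hs]
  exact Real.sqrt_pos.mpr (hPD.eigenvalues_pos i0)

lemma mulVec_inj_of_rank (X : Matrix (Fin m) (Fin n) ℝ) (h : X.rank = n) :
    ∀ v, X *ᵥ v = 0 → v = 0 := by
  intro v hv
  have hker : LinearMap.ker X.mulVecLin = ⊥ := by
    have h1 := LinearMap.finrank_range_add_finrank_ker X.mulVecLin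
    rw [show Module.finrank ℝ (LinearMap.range X.mulVecLin) = n from h, 
      Module.finrank_pi ℝ] at h1
    simp only [Fintype.card_fin] at h1
    have h2 : Module.finrank ℝ (LinearMap.ker X.mulVecLin) = 0 := by omega
    exact Submodule.finrank_eq_zero.mp h2
  have : v ∈ LinearMap.ker X.mulVecLin := by
    rw [LinearMap.mem_ker]; exact hv
  rw [hker] at this
  simpa using this

lemma frobNorm_le_of_cols (X : Matrix (Fin m) (Fin n) ℝ) (c : ℝ) (hc : 0 ≤ c)
    (h : ∀ j, vecNorm (fun i => X i j) ≤ c) : frobNorm X ≤ Real.sqrt n * c := by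
  rw [frobNorm, show Real.sqrt n * c = Real.sqrt (n * c ^ 2) by
    rw [Real.sqrt_mul (Nat.cast_nonneg n), Real.sqrt_sq hc]]
  apply Real.sqrt_le_sqrt
  rw [Finset.sum_comm]
  calc ∑ j, ∑ i, X i j ^ 2 ≤ ∑ j : Fin n, c ^ 2 := by
        apply Finset.sum_le_sum
        intro j _
        have h1 := h j
        have h2 : ∑ i, X i j ^ 2 = vecNorm (fun i => X i j) ^ 2 := (vecNorm_sq _).symm
        rw [h2]
        exact pow_le_pow_left₀ (vecNorm_nonneg _) h1 2
    _ = n * c ^ 2 := by simp [Finset.sum_const, nsmul_eq_mul]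

lemma mulVec_single_col (X : Matrix (Fin m) (Fin n) ℝ) (j : Fin n) :
    X *ᵥ Pi.single j 1 = fun i => X i j := by
  funext i
  rw [Matrix.mulVec_single]
  simp

lemma vecNorm_single (j : Fin n) : vecNorm (Pi.single j (1:ℝ)) = 1 := by
  have h : (∑ i : Fin n, (Pi.single j (1:ℝ) : Fin n → ℝ) i ^ 2) = 1 := by
    simp [Pi.single_apply]
  rw [vecNorm, h, Real.sqrt_one]

end Helpers3
section Helpers4

variable {m n : ℕ}

lemma vecNorm_zero : vecNorm (0 : Fin m → ℝ) = 0 := by simp [vecNorm]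

lemma abs_vecNorm_sub (x y : Fin m → ℝ) : |vecNorm x - vecNorm y| ≤ vecNorm (x - y) := by
  rw [vecNorm_eq_norm, vecNorm_eq_norm, vecNorm_eq_norm]
  exact abs_norm_sub_norm_le _ _

lemma vecNorm_neg_sub (x y : Fin m → ℝ) : vecNorm (x - y) = vecNorm (y - x) := by
  have h : x - y = (-1 : ℝ) • (y - x) := by funext i; simp
  rw [h, vecNorm_smul]; simp

lemma normalized_diff_bound (x y : Fin m → ℝ) (hx : 0 < vecNorm x) (hy : 0 < vecNorm y) :
    vecNorm ((vecNorm y)⁻¹ • y - (vecNorm x)⁻¹ • x)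
      ≤ 2 * vecNorm (y - x) / vecNorm y := by
  set nx := vecNorm x with hnx
  set ny := vecNorm y with hny
  have key : (ny⁻¹ • y - nx⁻¹ • x) = ny⁻¹ • (y - x) + (ny⁻¹ - nx⁻¹) • x := by
    funext i
    simp only [Pi.sub_apply, Pi.add_apply, Pi.smul_apply, smul_eq_mul]
    ring
  rw [key]
  have h1 := vecNorm_add_le (ny⁻¹ • (y - x)) ((ny⁻¹ - nx⁻¹) • x)
  rw [vecNorm_smul, vecNorm_smul] at h1
  have h2 : |ny⁻¹| = ny⁻¹ := abs_of_pos (by positivity)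
  have h5 : |nx - ny| ≤ vecNorm (y - x) := by
    have := abs_vecNorm_sub x y
    rwa [vecNorm_neg_sub] at this
  have h4 : ny⁻¹ - nx⁻¹ = (nx - ny) / (nx * ny) := by
    field_simp
  have h3 : |ny⁻¹ - nx⁻¹| * nx ≤ vecNorm (y - x) / ny := by
    rw [h4, abs_div, abs_of_pos (by positivity : (0:ℝ) < nx * ny)]
    rw [div_mul_eq_mul_div, div_le_div_iff₀ (by positivity) (by positivity)]
    nlinarith [mul_le_mul_of_nonneg_right h5 (le_of_lt (mul_pos hx hy))]
  calc vecNorm (ny⁻¹ • (y - x) + (ny⁻¹ - nx⁻¹) • x)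
      ≤ |ny⁻¹| * vecNorm (y - x) + |ny⁻¹ - nx⁻¹| * nx := h1
    _ ≤ ny⁻¹ * vecNorm (y - x) + vecNorm (y - x) / ny := by
        rw [h2]; exact add_le_add le_rfl h3
    _ = 2 * vecNorm (y - x) / ny := by field_simp; ring

lemma posDef_B (A : Matrix (Fin m) (Fin n) ℝ)
    (hinj : ∀ v, A *ᵥ v = 0 → v = 0)
    (hcol : ∀ j, 0 < vecNorm (fun i => A i j)) :
    (((A * colScale A)ᴴ) * (A * colScale A)).PosDef := by
  set B := A * colScale A with hB
  refine Matrix.PosDef.of_dotProduct_mulVec_pos (Matrix.isHermitian_conjTranspose_mul_self B) ?_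
  intro x hx
  rw [star_trivial, dot_transpose]
  have hBx : B *ᵥ x ≠ 0 := by
    intro hzero
    rw [hB, ← Matrix.mulVec_mulVec] at hzero
    have h1 := hinj _ hzero
    apply hx
    funext j
    have h2 := congrFun h1 j
    simp only [colScale, Matrix.mulVec_diagonal, Pi.zero_apply] at h2
    have h3 : (vecNorm (fun i => A i j))⁻¹ ≠ 0 := inv_ne_zero (ne_of_gt (hcol j))
    simpa using (mul_eq_zero.mp h2).resolve_left h3
  obtain ⟨i, hi⟩ := Function.ne_iff.mp hBx
  have hdp : (B *ᵥ x) ⬝ᵥ (B *ᵥ x) = ∑ i, (B *ᵥ x) i ^ 2 := by simp [dotProduct, pow_two]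
  rw [hdp]
  apply Finset.sum_pos' (fun i _ => sq_nonneg _)
  refine ⟨i, Finset.mem_univ i, ?_⟩
  have h6 : (B *ᵥ x) i ≠ 0 := by simpa using hi
  positivity

end Helpers4
set_option maxHeartbeats 1000000 in
/-- Lemma 2.11: relationship between the scaled condition numbers of a matrix
and its columnwise-small perturbation: `κ₂ᴰ(A + ΔA) ≤ 3κ₂ᴰ(A)`. -/
theorem scaled_cond_perturbation_bound
    {m n : ℕ} (hmn : n ≤ m)
    (A : Matrix (Fin m) (Fin n) ℝ) (hrank : A.rank = n)
    (u : ℝ) (hu : 0 < u)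
    (ΔA : Matrix (Fin m) (Fin n) ℝ)
    (hΔ : ∀ i j, |ΔA i j| ≤ 2 * u * vecNorm (fun i => A i j))
    (h1 : 4 * Real.sqrt m * u < 1)
    (h2 : 16 * m * Real.sqrt n * u * scaledCond A < 1) :
    (∀ j, (fun i => (A + ΔA) i j) ≠ 0) ∧
      scaledCond (A + ΔA) ≤ 3 * scaledCond A := by
  rcases Nat.eq_zero_or_pos n with hn0 | hn
  · subst hn0
    refine ⟨fun j => j.elim0, ?_⟩
    have hz : ∀ (X : Matrix (Fin m) (Fin 0) ℝ), scaledCond X = 0 := by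
      intro X
      simp [scaledCond, kappa2, specNorm, sMin, Real.iSup_of_isEmpty, Real.iInf_of_isEmpty]
    rw [hz, hz]; norm_num
  have hm0 : 0 < m := lt_of_lt_of_le hn hmn
  set t := 2 * Real.sqrt m * u with ht_def
  have hsm1 : (1:ℝ) ≤ Real.sqrt m := by
    rw [show (1:ℝ) = Real.sqrt 1 from Real.sqrt_one.symm]
    exact Real.sqrt_le_sqrt (by exact_mod_cast hm0)
  have hsmsq : Real.sqrt m ^ 2 = (m:ℝ) := Real.sq_sqrt (Nat.cast_nonneg m)
  have hsmm : Real.sqrt m ≤ (m:ℝ) := by nlinarith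
  have hsn1 : (1:ℝ) ≤ Real.sqrt n := by
    rw [show (1:ℝ) = Real.sqrt 1 from Real.sqrt_one.symm]
    exact Real.sqrt_le_sqrt (by exact_mod_cast hn)
  have htpos : 0 < t := by positivity
  -- columns of A are nonzero
  have hinj := mulVec_inj_of_rank A hrank
  have hcolA : ∀ j, 0 < vecNorm (fun i => A i j) := by
    intro j
    rcases eq_or_lt_of_le (vecNorm_nonneg (fun i => A i j)) with h | h
    · exfalso
      have h0 : (fun i => A i j) = 0 := vecNorm_eq_zero h.symm
      have hone : A *ᵥ Pi.single j 1 = 0 := by rw [mulVec_single_col]; exact h0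
      have h2' := hinj _ hone
      have h3 := congrFun h2' j
      simp at h3
    · exact h
  set B := A * colScale A with hB
  have hPD := posDef_B A hinj hcolA
  have hτpos : 0 < sMin B := sMin_pos_of_posDef hn B hPD
  have hgen : ∀ (X : Matrix (Fin m) (Fin n) ℝ) (j : Fin n), (fun i => (X * colScale X) i j)
      = (vecNorm (fun i => X i j))⁻¹ • (fun i => X i j) := by
    intro X j; funext i
    show (X * Matrix.diagonal fun j => (vecNorm fun i => X i j)⁻¹) i j = _
    rw [Matrix.mul_diagonal]
    simp [Pi.smul_apply, smul_eq_mul, mul_comm]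
  have hBcol : ∀ j, (fun i => B i j)
      = (vecNorm (fun i => A i j))⁻¹ • (fun i => A i j) := by
    intro j; rw [hB]; exact hgen A j
  have hBcolnorm : ∀ j, vecNorm (fun i => B i j) = 1 := by
    intro j
    rw [hBcol j, vecNorm_smul, abs_of_pos (inv_pos.mpr (hcolA j)),
      inv_mul_cancel₀ (ne_of_gt (hcolA j))]
  have hσ1 : 1 ≤ specNorm B := by
    have hj : (0:ℕ) < n := hn
    set j : Fin n := ⟨0, hj⟩
    have h1' := mulVec_le_specNorm hn B (Pi.single j 1)
    rw [mulVec_single_col, vecNorm_single, mul_one, hBcolnorm j] at h1'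
    exact h1'
  have hτσ : sMin B ≤ specNorm B := by
    obtain ⟨v, hv1, hv2⟩ := exists_unit_sMin hn B
    have h1' := mulVec_le_specNorm hn B v
    rw [hv1, hv2, mul_one] at h1'
    exact h1'
  have hκ : scaledCond A = specNorm B / sMin B := rfl
  have hκ1 : 1 ≤ scaledCond A := by
    rw [hκ, le_div_iff₀ hτpos]; linarith
  have hκpos : 0 < scaledCond A := lt_of_lt_of_le one_pos hκ1
  -- u bounds
  have hu16 : 16 * Real.sqrt m * Real.sqrt n * u * scaledCond A < 1 := by
    have h3 : 16 * Real.sqrt m * Real.sqrt n * u * scaledCond A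
        ≤ 16 * (m:ℝ) * Real.sqrt n * u * scaledCond A := by
      have hbase : 16 * Real.sqrt m * Real.sqrt n * u ≤ 16 * (m:ℝ) * Real.sqrt n * u := by
        nlinarith [mul_le_mul_of_nonneg_right hsmm
          (by positivity : (0:ℝ) ≤ 16 * Real.sqrt n * u)]
      exact mul_le_mul_of_nonneg_right hbase (le_of_lt hκpos)
    linarith
  have ht8 : t ≤ 1/8 := by
    have hnκ : 1 ≤ Real.sqrt n * scaledCond A := one_le_mul_of_one_le_of_one_le hsn1 hκ1
    nlinarith [mul_le_mul_of_nonneg_left hnκ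
      (by positivity : (0:ℝ) ≤ 16 * Real.sqrt m * u), hu16]
  -- perturbed column norms
  have hΔcol : ∀ j, vecNorm (fun i => ΔA i j) ≤ t * vecNorm (fun i => A i j) := by
    intro j
    have hb : ∀ i, ΔA i j ^ 2 ≤ (2 * u * vecNorm (fun i => A i j)) ^ 2 := by
      intro i
      have h := hΔ i j
      nlinarith [abs_nonneg (ΔA i j), sq_abs (ΔA i j)]
    have hsum : ∑ i, ΔA i j ^ 2 ≤ (m:ℝ) * (2 * u * vecNorm (fun i => A i j)) ^ 2 := by
      calc ∑ i, ΔA i j ^ 2 ≤ ∑ _i : Fin m, (2 * u * vecNorm (fun i => A i j)) ^ 2 :=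
            Finset.sum_le_sum fun i _ => hb i
        _ = (m:ℝ) * (2 * u * vecNorm (fun i => A i j)) ^ 2 := by
            simp [Finset.sum_const, nsmul_eq_mul]
    calc vecNorm (fun i => ΔA i j)
        = Real.sqrt (∑ i, ΔA i j ^ 2) := rfl
      _ ≤ Real.sqrt ((m:ℝ) * (2 * u * vecNorm (fun i => A i j)) ^ 2) :=
            Real.sqrt_le_sqrt hsum
      _ = Real.sqrt m * (2 * u * vecNorm (fun i => A i j)) := by
            rw [Real.sqrt_mul (Nat.cast_nonneg m), Real.sqrt_sq (mul_nonneg (by positivity) (vecNorm_nonneg _))]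
      _ = t * vecNorm (fun i => A i j) := by rw [ht_def]; ring
  have hhatcol_low : ∀ j, (1 - t) * vecNorm (fun i => A i j)
      ≤ vecNorm (fun i => (A + ΔA) i j) := by
    intro j
    have hA_eq : (fun i => A i j) = (fun i => (A + ΔA) i j) - (fun i => ΔA i j) := by
      funext i; simp [Matrix.add_apply]
    have h1' : vecNorm (fun i => A i j)
        ≤ vecNorm (fun i => (A + ΔA) i j) + vecNorm (fun i => ΔA i j) := by
      rw [hA_eq]; exact vecNorm_sub_le _ _
    have h2' := hΔcol j
    nlinarith
  have hhatcol_pos : ∀ j, 0 < vecNorm (fun i => (A + ΔA) i j) := by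
    intro j
    have := hhatcol_low j
    nlinarith [hcolA j]
  have part1 : ∀ j, (fun i => (A + ΔA) i j) ≠ 0 := by
    intro j h
    have hp := hhatcol_pos j
    rw [h, vecNorm_zero] at hp
    exact lt_irrefl 0 hp
  -- the perturbed scaled matrix
  set Bh := (A + ΔA) * colScale (A + ΔA) with hBh
  set F := Bh - B with hF
  have hBhF : Bh = B + F := by rw [hF]; abel
  have hBhcol : ∀ j, (fun i => Bh i j)
      = (vecNorm (fun i => (A + ΔA) i j))⁻¹ • (fun i => (A + ΔA) i j) := by
    intro j; rw [hBh]; exact hgen (A + ΔA) j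
  have hFcol : ∀ j, vecNorm (fun i => F i j) ≤ (16/7) * t := by
    intro j
    have hcolF : (fun i => F i j) =
        (vecNorm (fun i => (A + ΔA) i j))⁻¹ • (fun i => (A + ΔA) i j)
          - (vecNorm (fun i => A i j))⁻¹ • (fun i => A i j) := by
      funext i
      rw [show F i j = Bh i j - B i j from by rw [hF]; simp [Matrix.sub_apply]]
      rw [congrFun (hBhcol j) i, congrFun (hBcol j) i]
      simp
    have hdiff : (fun i => (A + ΔA) i j) - (fun i => A i j) = (fun i => ΔA i j) := by
      funext i; simp [Matrix.add_apply]
    have hbound := normalized_diff_bound (fun i => A i j) (fun i => (A + ΔA) i j)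
      (hcolA j) (hhatcol_pos j)
    rw [hdiff] at hbound
    rw [hcolF]
    refine le_trans hbound ?_
    have hd : (7/8) * vecNorm (fun i => A i j) ≤ vecNorm (fun i => (A + ΔA) i j) := by
      have := hhatcol_low j
      nlinarith [hcolA j]
    calc 2 * vecNorm (fun i => ΔA i j) / vecNorm (fun i => (A + ΔA) i j)
        ≤ 2 * (t * vecNorm (fun i => A i j)) / ((7/8) * vecNorm (fun i => A i j)) := by
          apply div_le_div₀ ?_ ?_ (mul_pos (by norm_num) (hcolA j)) hd
          · nlinarith [htpos, hcolA j]
          · nlinarith [hΔcol j]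
      _ = (16/7) * t := by
          have hne : vecNorm (fun i => A i j) ≠ 0 := ne_of_gt (hcolA j)
          field_simp
          ring
    
  have hσF : specNorm F ≤ (2/7) * sMin B := by
    have hfr : specNorm F ≤ Real.sqrt n * ((16/7) * t) :=
      (specNorm_le_frobNorm hn F).trans
        (frobNorm_le_of_cols F _ (by positivity) hFcol)
    have h' : 16 * Real.sqrt m * Real.sqrt n * u * (specNorm B / sMin B) < 1 := by
      rw [← hκ]; exact hu16
    rw [← mul_div_assoc] at h'
    have hXσ : 16 * Real.sqrt m * Real.sqrt n * u * specNorm B < sMin B :=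
      (div_lt_one hτpos).mp h'
    have hXτ : 16 * Real.sqrt m * Real.sqrt n * u ≤ sMin B := by
      nlinarith [hu, hsm1, hsn1]
    have heq : Real.sqrt n * ((16/7) * t) = (2/7) * (16 * Real.sqrt m * Real.sqrt n * u) := by
      rw [ht_def]; ring
    rw [heq] at hfr
    linarith
  -- perturbation of extreme singular values
  have hσBh : specNorm Bh ≤ specNorm B + specNorm F := by
    obtain ⟨v, hv1, hv2⟩ := exists_unit_specNorm hn Bh
    have h3 : Bh *ᵥ v = B *ᵥ v + F *ᵥ v := by rw [hBhF, Matrix.add_mulVec]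
    have h4 : vecNorm (B *ᵥ v) ≤ specNorm B := by
      have := mulVec_le_specNorm hn B v
      rwa [hv1, mul_one] at this
    have h5 : vecNorm (F *ᵥ v) ≤ specNorm F := by
      have := mulVec_le_specNorm hn F v
      rwa [hv1, mul_one] at this
    calc specNorm Bh = vecNorm (Bh *ᵥ v) := hv2.symm
      _ = vecNorm (B *ᵥ v + F *ᵥ v) := by rw [h3]
      _ ≤ vecNorm (B *ᵥ v) + vecNorm (F *ᵥ v) := vecNorm_add_le _ _
      _ ≤ specNorm B + specNorm F := add_le_add h4 h5
  have hτBh : sMin B - specNorm F ≤ sMin Bh := by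
    obtain ⟨v, hv1, hv2⟩ := exists_unit_sMin hn Bh
    have h3 : B *ᵥ v = Bh *ᵥ v - F *ᵥ v := by rw [hBhF, Matrix.add_mulVec]; abel
    have h4 : vecNorm (B *ᵥ v) ≤ vecNorm (Bh *ᵥ v) + vecNorm (F *ᵥ v) := by
      rw [h3]; exact vecNorm_sub_le _ _
    have h5 : sMin B ≤ vecNorm (B *ᵥ v) := by
      have := sMin_mulVec_le hn B v
      rwa [hv1, mul_one] at this
    have h6 : vecNorm (F *ᵥ v) ≤ specNorm F := by
      have := mulVec_le_specNorm hn F v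
      rwa [hv1, mul_one] at this
    rw [hv2] at h4
    linarith
  have hτBh_pos : 0 < sMin Bh := by nlinarith
  have hfinal : scaledCond (A + ΔA) = specNorm Bh / sMin Bh := rfl
  refine ⟨part1, ?_⟩
  rw [hfinal, hκ]
  have h7 : specNorm Bh ≤ (9/7) * specNorm B := by nlinarith
  have h8 : (5/7) * sMin B ≤ sMin Bh := by nlinarith
  have hstep : specNorm Bh / sMin Bh ≤ ((9/7) * specNorm B) / ((5/7) * sMin B) := by
    apply div_le_div₀ (by nlinarith) h7 (by nlinarith) h8
  have he : ((9/7) * specNorm B) / ((5/7) * sMin B) = (9/5) * (specNorm B / sMin B) := by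
    field_simp
  have hq : 0 ≤ specNorm B / sMin B := div_nonneg (by linarith) (le_of_lt hτpos)
  rw [he] at hstep
  nlinarith
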